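/- The holomorphic vector field X = (1-ζ)∂/∂z + 2iz ∂/∂w is an infinitesimal automorphism of the model hypersurface {Im w = P(z,ζ,\bar z,\bar ζ)}: the real part of X applied to the defining function ρ = Im w − P vanishes identically on the hypersurface. Equivalently, Re( i·(2iz)/(2i) − (1-ζ) P_z ) restricted to {v = P} vanishes, i.e., Re( z − (1-ζ)P_z ) = 0 identically in (z,ζ,\bar z,\bar ζ). -/

import Mathlib

open Complex

noncomputable def P4 (z ζ zb ζb : ℂ) : ℂ :=
  (z * zb + (z ^ 2 * ζb + zb ^ 2 * ζ) / 2) / (1 - ζ * ζb)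

/-- The formal partial derivative of `P` in `z`. -/
noncomputable def Pz (z ζ zb ζb : ℂ) : ℂ :=
  deriv (fun s => P4 s ζ zb ζb) z

lemma Pz_eq (z ζ zb ζb : ℂ) : Pz z ζ zb ζb = (zb + z * ζb) / (1 - ζ * ζb) := by
  unfold Pz P4
  have h : HasDerivAt (fun s : ℂ => (s * zb + (s ^ 2 * ζb + zb ^ 2 * ζ) / 2) / (1 - ζ * ζb))
      ((zb + z * ζb) / (1 - ζ * ζb)) z := by
    have := (((hasDerivAt_id z).mul_const zb).add
      ((((hasDerivAt_pow 2 z).mul_const ζb).add_const (zb ^ 2 * ζ)).div_const 2)).div_const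
      (1 - ζ * ζb)
    refine HasDerivAt.congr_deriv this ?_
    simp
    ring
  exact h.deriv

/-- the field `X = (1-ζ)∂/∂z + 2iz ∂/∂w` is an infinitesimal
automorphism of `{Im w = P}`: `Re(z - (1-ζ) P_z) = 0` identically. -/
theorem infinitesimal_autom_g_minus_one (z ζ : ℂ) (hζ : ‖ζ‖ < 1) :
    (z - (1 - ζ) * Pz z ζ ((starRingEnd ℂ) z) ((starRingEnd ℂ) ζ)).re = 0 := by
  have hns : Complex.normSq ζ < 1 := by
    have := Complex.sq_norm ζ
    nlinarith [norm_nonneg ζ]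
  have h0 : (1 : ℂ) - ζ * (starRingEnd ℂ) ζ ≠ 0 := by
    rw [Complex.mul_conj]
    intro h
    have : (1 : ℝ) - Complex.normSq ζ = 0 := by exact_mod_cast h
    linarith
  have h0' : (1 : ℂ) - (starRingEnd ℂ) ζ * ζ ≠ 0 := by rwa [mul_comm]
  rw [Pz_eq]
  set e := z - (1 - ζ) * (((starRingEnd ℂ) z + z * (starRingEnd ℂ) ζ) / (1 - ζ * (starRingEnd ℂ) ζ)) with he
  have hsum : e + (starRingEnd ℂ) e = 0 := by
    rw [he]
    simp only [map_sub, map_mul, map_div₀, map_add, map_one, Complex.conj_conj]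
    field_simp
    ring
  have h2 := Complex.add_conj e
  rw [hsum] at h2
  have h3 : (2 : ℝ) * e.re = 0 := by exact_mod_cast h2.symm
  linarith
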